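/- Let h = p + εq be a dual quaternion with p ≠ 0 satisfying the Study condition pq̄ + qp̄ = 0. Then for every pure quaternion x the image (p x p̄ + p q̄ − q p̄)/N(p) is again a pure quaternion, and the resulting map on pure quaternions is a bijection that preserves Euclidean distances: for all pure quaternions x, y, the norm of (act of h on x) − (act of h on y) equals the norm of x − y. -/

import Mathlib

noncomputable section
open Polynomial

/-- The real quaternions ℍ. -/
abbrev Quat := Quaternion ℝ

/-- The dual quaternions 𝔻ℍ = ℍ ⊕ εℍ, realized as dual numbers over ℍ.
An element is a pair `(p, q)` representing `p + εq`. -/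
abbrev DQ := DualNumber Quat

/-- Conjugation of a dual quaternion `p + εq ↦ p̄ + εq̄`,
conjugating each quaternion part. -/
def dconj (h : DQ) : DQ := (star h.fst, star h.snd)

/-- The canonical ring homomorphism ℝ → 𝔻ℍ. -/
def realToDQ : ℝ →+* DQ := (TrivSqZeroExt.inlHom Quat Quat).comp (algebraMap ℝ Quat)

/-- Coefficientwise conjugate of a polynomial over 𝔻ℍ. -/
def pconj (C : DQ[X]) : DQ[X] := C.sum fun n a => Polynomial.C (dconj a) * X ^ n

/-- `C ∈ 𝔻ℍ[t]` is a motion polynomial if `C C̄ ∈ ℝ[t] \ {0}` and the leading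
coefficient of `C` is invertible. -/
def IsMotionPoly (C : DQ[X]) : Prop :=
  (∃ R : ℝ[X], R ≠ 0 ∧ C * pconj C = R.map realToDQ) ∧ IsUnit C.leadingCoeff

/-- The action of a dual quaternion `p + εq` (with `p ≠ 0` and satisfying the Study
condition) on a pure quaternion `x`:  `x ↦ (p x p̄ + p q̄ − q p̄)/N(p)`. -/
def act (p q x : Quat) : Quat :=
  (p * x * star p + p * star q - q * star p) * (p * star p)⁻¹


lemma re_act (p q x : Quat) (hx : x.re = 0) : (act p q x).re = 0 := by
  have h1 : (p * x * star p).re = 0 := by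
    simp only [Quaternion.re_mul, Quaternion.imI_mul, Quaternion.imJ_mul, Quaternion.imK_mul,
      Quaternion.re_star, Quaternion.imI_star, Quaternion.imJ_star, Quaternion.imK_star, hx]
    ring
  have h2 : (p * star q).re = (q * star p).re := by
    simp only [Quaternion.re_mul, Quaternion.re_star, Quaternion.imI_star,
      Quaternion.imJ_star, Quaternion.imK_star]
    ring
  have hA : (p * x * star p + p * star q - q * star p).re = 0 := by
    simp [Quaternion.re_add, Quaternion.re_sub, h1, h2]
  rw [act, show (p * star p)⁻¹ = (((Quaternion.normSq p)⁻¹ : ℝ) : Quat) by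
    rw [Quaternion.self_mul_star, Quaternion.coe_inv], Quaternion.mul_coe_eq_smul]
  simp [Quaternion.re_smul, hA]

lemma act_inv (p q : Quat) (hp : p ≠ 0) (x : Quat) :
    act (star p) (star q) (act p q x) = x := by
  set n : ℝ := Quaternion.normSq p with hn
  have hn0 : n ≠ 0 := Quaternion.normSq_ne_zero.2 hp
  have hpc : p * star p = (n : Quat) := Quaternion.self_mul_star p
  have hcp : star p * p = (n : Quat) := Quaternion.star_mul_self p
  have hinv : (p * star p)⁻¹ = (((n⁻¹ : ℝ)) : Quat) := by
    rw [hpc, Quaternion.coe_inv]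
  have hinv2 : (star p * p)⁻¹ = (((n⁻¹ : ℝ)) : Quat) := by
    rw [hcp, Quaternion.coe_inv]
  have key : star p * (p * x * star p + p * star q - q * star p) * p
      = n • (n • x) + n • (star q * p) - n • (star p * q) := by
    have h3 : n • (n • x) = (star p * p) * x * (star p * p) := by
      rw [hcp, Quaternion.coe_mul_eq_smul, Quaternion.mul_coe_eq_smul]
    rw [h3, show n • (star q * p) = (star p * p) * (star q * p) by
        rw [hcp, Quaternion.coe_mul_eq_smul],
      show n • (star p * q) = (star p * q) * (star p * p) by
        rw [hcp, Quaternion.mul_coe_eq_smul]]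
    noncomm_ring
  rw [act, act]
  simp only [star_star]
  rw [hinv, hinv2, Quaternion.mul_coe_eq_smul, Quaternion.mul_coe_eq_smul,
    mul_smul_comm, smul_mul_assoc, key]
  match_scalars <;> field_simp <;> ring

lemma act_dist (p q : Quat) (hp : p ≠ 0) (x y : Quat) :
    ‖act p q x - act p q y‖ = ‖x - y‖ := by
  have h : act p q x - act p q y = (p * (x - y) * star p) * (p * star p)⁻¹ := by
    rw [act, act]; noncomm_ring
  have hn : ‖p‖ ≠ 0 := norm_ne_zero_iff.2 hp
  rw [h, show (p * star p)⁻¹ = (((Quaternion.normSq p)⁻¹ : ℝ) : Quat) by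
    rw [Quaternion.self_mul_star, Quaternion.coe_inv]]
  rw [norm_mul, norm_mul, norm_mul, norm_star, Quaternion.norm_coe,
    Quaternion.normSq_eq_norm_mul_self]
  rw [Real.norm_eq_abs, abs_inv, abs_of_nonneg (by positivity)]
  field_simp

/-- The action of a dual quaternion with nonzero primal part satisfying
the Study condition maps pure quaternions to pure quaternions, is a bijection of the
pure quaternions, and preserves Euclidean distances. -/
theorem stmt1 (p q : Quat) (hp : p ≠ 0) (hs : p * star q + q * star p = 0) :
    (∀ x : Quat, x.re = 0 → (act p q x).re = 0) ∧
    (∃ f : {x : Quat // x.re = 0} ≃ {x : Quat // x.re = 0},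
      ∀ x : {x : Quat // x.re = 0}, (f x : Quat) = act p q (x : Quat)) ∧
    (∀ x y : Quat, x.re = 0 → y.re = 0 → ‖act p q x - act p q y‖ = ‖x - y‖) := by

  refine ⟨fun x hx => re_act p q x hx, ⟨⟨fun x => ⟨act p q x, re_act p q x x.2⟩,
    fun x => ⟨act (star p) (star q) x, re_act _ _ x x.2⟩, fun x => ?_, fun x => ?_⟩,
    fun x => rfl⟩, fun x y _ _ => act_dist p q hp x y⟩
  · exact Subtype.ext (act_inv p q hp x)
  · refine Subtype.ext ?_
    simpa using act_inv (star p) (star q) (star_ne_zero.2 hp) (x : Quat)
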